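/- Let n ≥ 1 and let {D_l}_{l∈ι} be a finite nonempty family of real n×m_l matrices with every column of every D_l summing to zero. Let λ > 0 satisfy: for every l ∈ ι and every δ ∈ ℝⁿ with Σ_i δ_i = 0, δᵀ(D_l D_lᵀ)δ ≥ λ·‖δ‖₂². Set m̲ = min_l m_l and m̄ = max_l m_l. Let Ω be a predefined-time consensus function with data (Ω̂, β, d), let T_c > 0, and for each l let the gains κ^{(l)}_e (one per column e of D_l) satisfy κ^{(l)}_e ≥ β(m̲)^d/(λ·β(m̄)²·T_c). Define F_l : ℝ^{m_l} → ℝ^{m_l} by F_l(v)_e = κ^{(l)}_e·Ω(|v_e|)/v_e if v_e ≠ 0 and F_l(v)_e = 0 if v_e = 0. Let z* ∈ ℝⁿ be a position realizing a feasible displacement requirement, let σ : [t₀,∞) → ι be arbitrary, and let z : [t₀,∞) → ℝⁿ be differentiable with ż(t) = −D_{σ(t)}·F_{σ(t)}(D_{σ(t)}ᵀ·(z(t) − z*)) for all t ≥ t₀. Then for all t ≥ t₀ + T_c, z(t) = z* + α·𝟏 with α = (1/n)Σ_{j=1}^n (z_j(t₀) − z*_j); in particular z_j(t) − z_i(t)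 = z*_j − z*_i for all i, j, so the desired formation is reached within the predefined time T_c. -/

import Mathlib

open Matrix MeasureTheory

/-- A predefined-time consensus function Ω with data (Ω̂, β, d): Ω is monotonically
increasing and nonnegative on [0,∞); Ω̂ is monotonically increasing on [0,∞), positive on
(0,∞) and Ω̂(z)/z is continuous on (0,∞); β is nonincreasing and positive; d ≥ 1;
Ω̂(β(n)‖x‖₂) ≤ β(n)^d Σᵢ Ω(xᵢ) for all n ≥ 1 and nonnegative x ∈ ℝⁿ; and
∫₀^∞ z/Ω̂(z) dz = 1. -/
def IsPredefinedTimeConsensusFunction (Ω Ωhat : ℝ → ℝ) (β : ℕ → ℝ) (d : ℝ) : Prop :=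
  Monotone Ω ∧ (∀ z : ℝ, 0 ≤ z → 0 ≤ Ω z) ∧
  MonotoneOn Ωhat (Set.Ici 0) ∧ (∀ z : ℝ, 0 < z → 0 < Ωhat z) ∧
  ContinuousOn (fun z => Ωhat z / z) (Set.Ioi 0) ∧
  Antitone β ∧ (∀ n : ℕ, 0 < β n) ∧ 1 ≤ d ∧
  (∀ n : ℕ, 1 ≤ n → ∀ x : Fin n → ℝ, (∀ i, 0 ≤ x i) →
    Ωhat (β n * Real.sqrt (∑ i, x i ^ 2)) ≤ β n ^ d * ∑ i, Ω (x i)) ∧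
  (∫ z in Set.Ioi (0:ℝ), z / Ωhat z) = 1

private lemma const_of_deriv_zero {f : ℝ → ℝ} {t₀ : ℝ}
    (h : ∀ t, t₀ ≤ t → HasDerivAt f 0 t) : ∀ t, t₀ ≤ t → f t = f t₀ := by
  intro t ht
  have hcont : ContinuousOn f (Set.Icc t₀ t) := fun s hs =>
    ((h s hs.1).continuousAt).continuousWithinAt
  have := constant_of_has_deriv_right_zero hcont
    (fun s hs => ((h s hs.1).hasDerivWithinAt))
  exact this t (Set.right_mem_Icc.2 ht)

private lemma antitoneOn_of_hasDerivAt_nonpos {S : Set ℝ} (hS : Convex ℝ S) {f f' : ℝ → ℝ}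
    (hf : ∀ t ∈ S, HasDerivAt f (f' t) t) (h0 : ∀ t ∈ interior S, f' t ≤ 0) :
    AntitoneOn f S := by
  apply antitoneOn_of_deriv_nonpos hS
  · exact fun s hs => (hf s hs).continuousAt.continuousWithinAt
  · exact fun s hs => (hf s (interior_subset hs)).differentiableAt.differentiableWithinAt
  · intro s hs; rw [(hf s (interior_subset hs)).deriv]; exact h0 s hs


set_option maxHeartbeats 4000000

/-- Corollary on formation control: with gains
κ⁽ˡ⁾ₑ ≥ β(m̲)^d/(λβ(m̄)²T_c), the displacement-based position update rule
ż = −D_{σ(t)}·F_{σ(t)}(D_{σ(t)}ᵀ(z − z*)) drives z to z* + α𝟏 with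
α = (1/n)Σⱼ(zⱼ(t₀) − z*ⱼ) within the predefined time T_c, so the desired formation
z_j − z_i = z*_j − z*_i is reached within T_c. -/
theorem stmt18 {ι : Type} [Fintype ι] [Nonempty ι] {n : ℕ} (hn : 1 ≤ n)
    (m : ι → ℕ) (D : (l : ι) → Matrix (Fin n) (Fin (m l)) ℝ)
    (hD : ∀ l, ∀ j, (∑ i, D l i j) = 0)
    (lam : ℝ) (hlam : 0 < lam)
    (hRay : ∀ l, ∀ δ : Fin n → ℝ, (∑ i, δ i) = 0 →
      lam * (∑ i, δ i ^ 2) ≤ δ ⬝ᵥ ((D l * (D l)ᵀ).mulVec δ))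
    (mlow mhigh : ℕ)
    (hmlow : IsLeast (Set.range m) mlow) (hmhigh : IsGreatest (Set.range m) mhigh)
    (Ω Ωhat : ℝ → ℝ) (β : ℕ → ℝ) (d : ℝ)
    (hΩ : IsPredefinedTimeConsensusFunction Ω Ωhat β d)
    (Tc : ℝ) (hTc : 0 < Tc)
    (κ : (l : ι) → Fin (m l) → ℝ)
    (hκ : ∀ l e, β mlow ^ d / (lam * β mhigh ^ 2 * Tc) ≤ κ l e)
    (F : (l : ι) → (Fin (m l) → ℝ) → (Fin (m l) → ℝ))
    (hF : ∀ l v e, F l v e = if v e = 0 then 0 else κ l e * Ω |v e| / v e)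
    (zstar : Fin n → ℝ) (σ : ℝ → ι) (t₀ : ℝ) (z : ℝ → Fin n → ℝ)
    (hz : ∀ t, t₀ ≤ t →
      HasDerivAt z
        (-(D (σ t)).mulVec (F (σ t) ((D (σ t))ᵀ.mulVec (fun i => z t i - zstar i)))) t) :
    ∀ t, t₀ + Tc ≤ t →
      (∀ i, z t i = zstar i + (1 / (n : ℝ)) * ∑ j, (z t₀ j - zstar j)) ∧
      (∀ i j, z t j - z t i = zstar j - zstar i) := by
  obtain ⟨hΩmono, hΩnn, hhatMono, hhatPos, hhatCont, hβanti, hβpos, hd1, hkey, hint⟩ := hΩ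
  intro t ht
  -- basic constants
  set κs : ℝ := β mlow ^ d / (lam * β mhigh ^ 2 * Tc) with hκs
  have hn0 : (0:ℝ) < (n:ℝ) := by exact_mod_cast hn
  have hβl : 0 < β mlow := hβpos mlow
  have hβh : 0 < β mhigh := hβpos mhigh
  have hβld : 0 < β mlow ^ d := Real.rpow_pos_of_pos hβl d
  have hκspos : 0 < κs := by
    apply div_pos hβld
    positivity
  have hκsle : ∀ l e, κs ≤ κ l e := fun l e => hκ l e
  have htt₀ : t₀ ≤ t := by linarith
  -- the dynamics vector field
  set dv : ℝ → Fin n → ℝ :=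
    fun s => -(D (σ s)).mulVec (F (σ s) ((D (σ s))ᵀ.mulVec (fun i => z s i - zstar i)))
    with hdv
  have hzi : ∀ s, t₀ ≤ s → ∀ i, HasDerivAt (fun u => z u i) (dv s i) s :=
    fun s hs i => hasDerivAt_pi.1 (hz s hs) i
  -- conservation of the sum
  have hconsv : ∀ s, t₀ ≤ s → ∑ i, z s i = ∑ i, z t₀ i := by
    apply const_of_deriv_zero
    intro s hs
    have h1 : HasDerivAt (fun u => ∑ i, z u i) (∑ i, dv s i) s :=
      HasDerivAt.fun_sum (fun i _ => hzi s hs i)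
    have h2 : ∑ i, dv s i = 0 := by
      simp only [hdv, Pi.neg_apply, Matrix.mulVec, dotProduct]
      rw [Finset.sum_neg_distrib, Finset.sum_comm]
      simp only [← Finset.sum_mul, hD, zero_mul, Finset.sum_const_zero, neg_zero]
    rwa [h2] at h1
  set μ : ℝ := (1 / (n:ℝ)) * ∑ j, (z t₀ j - zstar j) with hμ
  set δf : ℝ → Fin n → ℝ := fun s i => z s i - zstar i - μ with hδf
  set V : ℝ → ℝ := fun s => ∑ i, (δf s i)^2 with hV
  have hδsum : ∀ s, t₀ ≤ s → ∑ i, δf s i = 0 := by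
    intro s hs
    have h1 : ∑ i, δf s i = (∑ i, (z s i - zstar i)) - (n:ℝ) * μ := by
      simp only [hδf]
      rw [Finset.sum_sub_distrib, Finset.sum_const, Finset.card_univ, Fintype.card_fin,
        nsmul_eq_mul]
    have h2 : ∑ i, (z s i - zstar i) = ∑ i, (z t₀ i - zstar i) := by
      rw [Finset.sum_sub_distrib, Finset.sum_sub_distrib, hconsv s hs]
    rw [h1, h2, hμ]
    field_simp
    ring
  have hVnn : ∀ s, 0 ≤ V s := fun s => Finset.sum_nonneg (fun i _ => sq_nonneg _)
  -- the dissipation rate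
  set R : ℝ → ℝ :=
    fun s => ∑ e, ((D (σ s))ᵀ.mulVec (fun i => z s i - zstar i)) e *
      F (σ s) ((D (σ s))ᵀ.mulVec (fun i => z s i - zstar i)) e with hR
  have hterm : ∀ (l : ι) (v : Fin (m l) → ℝ) (e : Fin (m l)),
      v e * F l v e = if v e = 0 then 0 else κ l e * Ω |v e| := by
    intro l v e
    rw [hF]
    by_cases h : v e = 0
    · simp [h]
    · simp only [if_neg h]
      rw [mul_comm, div_mul_cancel₀ _ h]
  have hRnn : ∀ s, 0 ≤ R s := by
    intro s
    apply Finset.sum_nonneg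
    intro e _
    rw [hterm]
    split
    · exact le_refl _
    · exact mul_nonneg (le_trans hκspos.le (hκsle _ e)) (hΩnn _ (abs_nonneg _))
  set W : ℝ → ℝ := fun s => ∑ e, (if ((D (σ s))ᵀ.mulVec (fun i => z s i - zstar i)) e = 0 then 0
      else Ω |((D (σ s))ᵀ.mulVec (fun i => z s i - zstar i)) e|) with hWdef
  have hWnn : ∀ s, 0 ≤ W s := by
    intro s
    rw [hWdef]
    apply Finset.sum_nonneg
    intro e _
    split
    · exact le_refl _
    · exact hΩnn _ (abs_nonneg _)
  have hRκ : ∀ s, κs * W s ≤ R s := by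
    intro s
    rw [hWdef]
    dsimp only
    rw [Finset.mul_sum]
    apply Finset.sum_le_sum
    intro e _
    rw [hterm]
    by_cases h : ((D (σ s))ᵀ.mulVec (fun i => z s i - zstar i)) e = 0
    · simp [h]
    · simp only [if_neg h]
      exact mul_le_mul_of_nonneg_right (hκsle _ e) (hΩnn _ (abs_nonneg _))
  have hDT : ∀ s, (D (σ s))ᵀ.mulVec (δf s)
      = (D (σ s))ᵀ.mulVec (fun i => z s i - zstar i) := by
    intro s
    funext e
    simp only [Matrix.mulVec, dotProduct, Matrix.transpose_apply, hδf]
    have : ∀ i, D (σ s) i e * (z s i - zstar i - μ)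
        = D (σ s) i e * (z s i - zstar i) - μ * D (σ s) i e := by intro i; ring
    rw [Finset.sum_congr rfl fun i _ => this i, Finset.sum_sub_distrib, ← Finset.mul_sum,
      hD, mul_zero, sub_zero]
  have hVd : ∀ s, t₀ ≤ s → HasDerivAt V (-2 * R s) s := by
    intro s hs
    have h1 : ∀ i : Fin n, HasDerivAt (fun u => (δf u i)^2) (2 * δf s i * dv s i) s := by
      intro i
      have hb : HasDerivAt (fun u => z u i - zstar i - μ) (dv s i) s :=
        ((hzi s hs i).sub_const (zstar i)).sub_const μ
      have h2 := hb.fun_pow 2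
      exact h2.congr_deriv (by push_cast; ring)
    have hsum := HasDerivAt.fun_sum (fun i (_ : i ∈ Finset.univ) => h1 i)
    have key : ∑ i, 2 * δf s i * dv s i = -2 * R s := by
      have h1 : ∑ i, 2 * δf s i * dv s i
          = -2 * (δf s ⬝ᵥ ((D (σ s)).mulVec
              (F (σ s) ((D (σ s))ᵀ.mulVec fun i => z s i - zstar i)))) := by
        simp only [hdv, Pi.neg_apply, dotProduct, Finset.mul_sum]
        apply Finset.sum_congr rfl
        intro i _
        ring
      rw [h1, Matrix.dotProduct_mulVec, ← Matrix.mulVec_transpose, hDT s, hR]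
      simp only [dotProduct, Finset.mul_sum]
    rw [← key]
    exact hsum
  have hVanti : AntitoneOn V (Set.Ici t₀) := by
    apply antitoneOn_of_hasDerivAt_nonpos (convex_Ici t₀) (fun s hs => hVd s hs)
    intro s hs
    have := hRnn s
    nlinarith
  -- Rayleigh bound
  have hRayV : ∀ s, t₀ ≤ s →
      lam * V s ≤ ∑ e, (((D (σ s))ᵀ.mulVec (fun i => z s i - zstar i)) e)^2 := by
    intro s hs
    have h := hRay (σ s) (δf s) (hδsum s hs)
    rw [← Matrix.mulVec_mulVec, Matrix.dotProduct_mulVec, ← Matrix.mulVec_transpose,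
      hDT s] at h
    calc lam * V s = lam * ∑ i, (δf s i)^2 := rfl
    _ ≤ _ := h
    _ = ∑ e, (((D (σ s))ᵀ.mulVec (fun i => z s i - zstar i)) e)^2 := by
        simp only [dotProduct, sq]
  -- continuity of Ωhat on (0, ∞)
  have hΩhatContOn : ContinuousOn Ωhat (Set.Ioi 0) := by
    have h1 : ContinuousOn (fun u => Ωhat u / u * u) (Set.Ioi 0) :=
      hhatCont.mul continuousOn_id
    apply h1.congr
    intro u hu
    exact (div_mul_cancel₀ _ (ne_of_gt (Set.mem_Ioi.1 hu))).symm
  -- existence of an active edge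
  have hedge : ∀ s, t₀ ≤ s → 0 < V s →
      ∃ e, ((D (σ s))ᵀ.mulVec (fun i => z s i - zstar i)) e ≠ 0 := by
    intro s hs hVs
    by_contra h
    push_neg at h
    have h2 := hRayV s hs
    have h3 : ∑ e, (((D (σ s))ᵀ.mulVec (fun i => z s i - zstar i)) e)^2 = 0 := by
      apply Finset.sum_eq_zero
      intro e _
      rw [h e]
      ring
    rw [h3] at h2
    nlinarith
  haveI hFinNe : Nonempty (Fin n) := ⟨⟨0, by omega⟩⟩
  -- main claim : V t = 0
  have hVt : V t = 0 := by
    rcases (hVnn t).eq_or_lt with h0 | hVtpos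
    · exact h0.symm
    exfalso
    have hVpos : ∀ s, s ∈ Set.Icc t₀ t → 0 < V s := fun s hs =>
      lt_of_lt_of_le hVtpos (hVanti (Set.mem_Ici.2 hs.1) (Set.mem_Ici.2 htt₀) hs.2)
    by_cases hAB : ∀ ε : ℝ, 0 < ε → ∃ τ : ℝ, 0 < τ ∧ Ω τ < ε
    · -- CASE B : inf of Ω on (0,∞) is 0 ; comparison argument
      set g : ℝ → ℝ := fun y => Ωhat (β mhigh * Real.sqrt (lam * y)) / β mlow ^ d with hgdef
      set w : ℝ → ℝ := fun y => 1 / (2 * κs * g y) with hwdef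
      have hgpos : ∀ y : ℝ, 0 < y → 0 < g y := by
        intro y hy
        rw [hgdef]
        apply div_pos _ hβld
        apply hhatPos
        have h1 : 0 < Real.sqrt (lam * y) := Real.sqrt_pos.2 (by positivity)
        positivity
      have hwpos : ∀ y : ℝ, 0 < y → 0 < w y := by
        intro y hy
        rw [hwdef]
        have := hgpos y hy
        dsimp only
        positivity
      -- the pointwise rate estimate
      have hrate : ∀ s, t₀ ≤ s → 0 < V s → κs * g (V s) ≤ R s := by
        intro s hs hVs
        obtain ⟨e₀, he₀⟩ := hedge s hs hVs
        have hm1 : 1 ≤ m (σ s) := e₀.pos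
        have hstep : ∀ τ : ℝ, 0 < τ →
            Ωhat (β mhigh * Real.sqrt (lam * V s)) ≤
              β mlow ^ d * (W s + (m (σ s) : ℝ) * Ω τ) := by
          intro τ hτ
          have hynn : ∀ e, 0 ≤ (if ((D (σ s))ᵀ.mulVec (fun i => z s i - zstar i)) e = 0 then τ
              else |((D (σ s))ᵀ.mulVec (fun i => z s i - zstar i)) e|) := by
            intro e
            split
            · exact hτ.le
            · exact abs_nonneg _
          have h4 := hkey (m (σ s)) hm1
            (fun e => if ((D (σ s))ᵀ.mulVec (fun i => z s i - zstar i)) e = 0 then τ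
              else |((D (σ s))ᵀ.mulVec (fun i => z s i - zstar i)) e|) hynn
          have h1 : lam * V s ≤ ∑ e, (if ((D (σ s))ᵀ.mulVec (fun i => z s i - zstar i)) e = 0
              then τ else |((D (σ s))ᵀ.mulVec (fun i => z s i - zstar i)) e|) ^ 2 := by
            refine le_trans (hRayV s hs) (Finset.sum_le_sum fun e _ => ?_)
            split
            · rename_i h
              rw [h]
              simpa using sq_nonneg τ
            · rw [sq_abs]
          have h2 : β mhigh * Real.sqrt (lam * V s)
              ≤ β (m (σ s)) * Real.sqrt (∑ e, (if ((D (σ s))ᵀ.mulVec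
                (fun i => z s i - zstar i)) e = 0 then τ
                else |((D (σ s))ᵀ.mulVec (fun i => z s i - zstar i)) e|) ^ 2) :=
            mul_le_mul (hβanti (hmhigh.2 ⟨σ s, rfl⟩)) (Real.sqrt_le_sqrt h1)
              (Real.sqrt_nonneg _) (hβpos _).le
          have h3 := hhatMono
            (Set.mem_Ici.2 (mul_nonneg (hβpos _).le (Real.sqrt_nonneg _)))
            (Set.mem_Ici.2 (mul_nonneg (hβpos _).le (Real.sqrt_nonneg _))) h2
          have h5 : ∑ e, Ω ((fun e => if ((D (σ s))ᵀ.mulVec (fun i => z s i - zstar i)) e = 0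
              then τ else |((D (σ s))ᵀ.mulVec (fun i => z s i - zstar i)) e|) e)
              ≤ W s + (m (σ s) : ℝ) * Ω τ := by
            have hΩτ := hΩnn τ hτ.le
            have hterm2 : ∀ e : Fin (m (σ s)),
                Ω (if ((D (σ s))ᵀ.mulVec (fun i => z s i - zstar i)) e = 0 then τ
                  else |((D (σ s))ᵀ.mulVec (fun i => z s i - zstar i)) e|)
                ≤ (if ((D (σ s))ᵀ.mulVec (fun i => z s i - zstar i)) e = 0 then 0
                  else Ω |((D (σ s))ᵀ.mulVec (fun i => z s i - zstar i)) e|) + Ω τ := by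
              intro e
              by_cases h : ((D (σ s))ᵀ.mulVec (fun i => z s i - zstar i)) e = 0
              · simp [h]
              · simp only [if_neg h]
                linarith
            calc ∑ e, Ω ((fun e => if ((D (σ s))ᵀ.mulVec (fun i => z s i - zstar i)) e = 0
                then τ else |((D (σ s))ᵀ.mulVec (fun i => z s i - zstar i)) e|) e)
                ≤ ∑ e, ((if ((D (σ s))ᵀ.mulVec (fun i => z s i - zstar i)) e = 0 then 0
                  else Ω |((D (σ s))ᵀ.mulVec (fun i => z s i - zstar i)) e|) + Ω τ) :=
                  Finset.sum_le_sum fun e _ => hterm2 e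
              _ = W s + (m (σ s) : ℝ) * Ω τ := by
                  rw [Finset.sum_add_distrib, Finset.sum_const, Finset.card_univ,
                    Fintype.card_fin, nsmul_eq_mul, hWdef]
          have h6 : β (m (σ s)) ^ d ≤ β mlow ^ d :=
            Real.rpow_le_rpow (hβpos _).le (hβanti (hmlow.2 ⟨σ s, rfl⟩)) (by linarith)
          have h7 : (0:ℝ) ≤ ∑ e, Ω ((fun e => if ((D (σ s))ᵀ.mulVec
              (fun i => z s i - zstar i)) e = 0 then τ
              else |((D (σ s))ᵀ.mulVec (fun i => z s i - zstar i)) e|) e) :=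
            Finset.sum_nonneg fun e _ => hΩnn _ (hynn e)
          calc Ωhat (β mhigh * Real.sqrt (lam * V s))
              ≤ Ωhat (β (m (σ s)) * Real.sqrt (∑ e, (if ((D (σ s))ᵀ.mulVec
                (fun i => z s i - zstar i)) e = 0 then τ
                else |((D (σ s))ᵀ.mulVec (fun i => z s i - zstar i)) e|) ^ 2)) := h3
            _ ≤ β (m (σ s)) ^ d * ∑ e, Ω ((fun e => if ((D (σ s))ᵀ.mulVec
                (fun i => z s i - zstar i)) e = 0 then τ
                else |((D (σ s))ᵀ.mulVec (fun i => z s i - zstar i)) e|) e) := h4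
            _ ≤ β mlow ^ d * ∑ e, Ω ((fun e => if ((D (σ s))ᵀ.mulVec
                (fun i => z s i - zstar i)) e = 0 then τ
                else |((D (σ s))ᵀ.mulVec (fun i => z s i - zstar i)) e|) e) :=
                mul_le_mul_of_nonneg_right h6 h7
            _ ≤ β mlow ^ d * (W s + (m (σ s) : ℝ) * Ω τ) :=
                mul_le_mul_of_nonneg_left h5 hβld.le
        -- pass to the limit τ → 0
        have hlim : Ωhat (β mhigh * Real.sqrt (lam * V s)) ≤ β mlow ^ d * W s := by
          by_contra hcon
          push_neg at hcon
          set ε : ℝ := Ωhat (β mhigh * Real.sqrt (lam * V s)) - β mlow ^ d * W s with hε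
          have hεpos : 0 < ε := by rw [hε]; linarith
          obtain ⟨τ, hτ, hΩτsm⟩ := hAB (ε / (β mlow ^ d * ((m (σ s) : ℝ) + 1))) (by positivity)
          have h8 := hstep τ hτ
          have hΩτnn := hΩnn τ hτ.le
          have h9 : β mlow ^ d * ((m (σ s) : ℝ)) * Ω τ < ε := by
            calc β mlow ^ d * ((m (σ s) : ℝ)) * Ω τ
                ≤ β mlow ^ d * ((m (σ s) : ℝ) + 1) * Ω τ := by nlinarith
              _ < β mlow ^ d * ((m (σ s) : ℝ) + 1) * (ε / (β mlow ^ d * ((m (σ s) : ℝ) + 1))) := by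
                  apply mul_lt_mul_of_pos_left hΩτsm (by positivity)
              _ = ε := by field_simp
          have h10 : β mlow ^ d * (W s + (m (σ s) : ℝ) * Ω τ)
              = β mlow ^ d * W s + β mlow ^ d * ((m (σ s) : ℝ)) * Ω τ := by ring
          rw [h10] at h8
          rw [hε] at h9
          linarith
        have h11 : g (V s) ≤ W s := by
          rw [hgdef]
          dsimp only
          rw [div_le_iff₀ hβld]
          linarith [hlim]
        calc κs * g (V s) ≤ κs * W s := mul_le_mul_of_nonneg_left h11 hκspos.le
          _ ≤ R s := hRκ s
      -- integrability of the comparison density and total mass Tc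
      have hintuΩ : IntegrableOn (fun u => u / Ωhat u) (Set.Ioi 0) := by
        by_contra hcon
        rw [MeasureTheory.integral_undef hcon] at hint
        norm_num at hint
      set φ : ℝ → ℝ := fun u => u ^ 2 / (lam * β mhigh ^ 2) with hφdef
      have hφd : ∀ u ∈ Set.Ioi (0:ℝ),
          HasDerivWithinAt φ (2 * u / (lam * β mhigh ^ 2)) (Set.Ioi 0) u := by
        intro u hu
        have h1 : HasDerivAt φ (2 * u / (lam * β mhigh ^ 2)) u := by
          have h2 := (hasDerivAt_pow 2 u).div_const (lam * β mhigh ^ 2)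
          simpa using h2
        exact h1.hasDerivWithinAt
      have hφinj : Set.InjOn φ (Set.Ioi 0) := by
        intro a ha b hb hab
        rw [hφdef] at hab
        dsimp only at hab
        have hc2 : lam * β mhigh ^ 2 ≠ 0 := by positivity
        have h1 : a ^ 2 = b ^ 2 := by
          field_simp at hab
          exact hab
        calc a = Real.sqrt (a ^ 2) := (Real.sqrt_sq (le_of_lt ha)).symm
          _ = Real.sqrt (b ^ 2) := by rw [h1]
          _ = b := Real.sqrt_sq (le_of_lt hb)
      have hφim : φ '' (Set.Ioi 0) = Set.Ioi 0 := by
        ext y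
        constructor
        · rintro ⟨u, hu, rfl⟩
          have : (0:ℝ) < u := hu
          rw [hφdef]
          dsimp only
          exact Set.mem_Ioi.2 (by positivity)
        · intro hy
          have hy' : (0:ℝ) < y := hy
          refine ⟨Real.sqrt (lam * β mhigh ^ 2 * y), Real.sqrt_pos.2 (by positivity), ?_⟩
          rw [hφdef]
          dsimp only
          rw [Real.sq_sqrt (by positivity)]
          field_simp
      have hκsmul : κs * (lam * β mhigh ^ 2 * Tc) = β mlow ^ d := by
        rw [hκs]
        field_simp
      have hcompfun : ∀ u ∈ Set.Ioi (0:ℝ),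
          |2 * u / (lam * β mhigh ^ 2)| • w (φ u) = Tc * (u / Ωhat u) := by
        intro u hu
        have hu0 : (0:ℝ) < u := hu
        have h2 : β mhigh * Real.sqrt (lam * φ u) = u := by
          rw [hφdef]
          dsimp only
          have h3 : lam * (u ^ 2 / (lam * β mhigh ^ 2)) = (u / β mhigh) ^ 2 := by
            field_simp
          rw [h3, Real.sqrt_sq (by positivity)]
          field_simp
        have h3 : g (φ u) = Ωhat u / β mlow ^ d := by
          rw [hgdef]
          dsimp only
          rw [h2]
        have hΩu : (0:ℝ) < Ωhat u := hhatPos u hu0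
        have hkey2 : ∀ (A B K H u' : ℝ), 0 < A → 0 < B → 0 < K → 0 < H →
            K * (A * Tc) = B →
            2 * u' / A * (1 / (2 * K * (H / B))) = Tc * (u' / H) := by
          intro A B K H u' hA hB hK hH hrel
          rw [← hrel]
          field_simp
        rw [abs_of_nonneg (by positivity), smul_eq_mul, hwdef]
        dsimp only
        rw [h3]
        exact hkey2 (lam * β mhigh ^ 2) (β mlow ^ d) κs (Ωhat u) u (by positivity) hβld
          hκspos hΩu hκsmul
      have hintW : IntegrableOn w (Set.Ioi 0) := by
        have h1 := integrableOn_image_iff_integrableOn_abs_deriv_smul measurableSet_Ioi hφd hφinj w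
        rw [hφim] at h1
        rw [h1]
        exact MeasureTheory.IntegrableOn.congr_fun
          (MeasureTheory.Integrable.const_mul hintuΩ Tc)
          (fun u hu => (hcompfun u hu).symm) measurableSet_Ioi
      have hiW : ∫ y in Set.Ioi (0:ℝ), w y = Tc := by
        have h1 := integral_image_eq_integral_abs_deriv_smul measurableSet_Ioi hφd hφinj w
        rw [hφim] at h1
        rw [h1, MeasureTheory.setIntegral_congr_fun measurableSet_Ioi hcompfun,
          MeasureTheory.integral_const_mul, hint, mul_one]
      -- continuity of w on (0,∞)
      have hinner : Continuous (fun y : ℝ => β mhigh * Real.sqrt (lam * y)) :=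
        continuous_const.mul (Real.continuous_sqrt.comp (continuous_const.mul continuous_id))
      have hmaps : Set.MapsTo (fun y : ℝ => β mhigh * Real.sqrt (lam * y))
          (Set.Ioi 0) (Set.Ioi 0) := by
        intro y hy
        have hy' : (0:ℝ) < y := hy
        have h1 : 0 < Real.sqrt (lam * y) := Real.sqrt_pos.2 (by positivity)
        exact Set.mem_Ioi.2 (by positivity)
      have hgcont : ContinuousOn g (Set.Ioi 0) := by
        rw [hgdef]
        exact (ContinuousOn.comp hΩhatContOn hinner.continuousOn hmaps).div_const _
      have hwcont : ContinuousOn w (Set.Ioi 0) := by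
        have h2 : ContinuousOn (fun y => 2 * κs * g y) (Set.Ioi 0) :=
          continuousOn_const.mul hgcont
        have h3 : ContinuousOn (fun y => 1 / (2 * κs * g y)) (Set.Ioi 0) := by
          apply ContinuousOn.div continuousOn_const h2
          intro y hy
          have := hgpos y hy
          positivity
        rw [hwdef]
        exact h3
      -- the comparison function Ψ
      have hIntOc : ∀ y : ℝ, 0 ≤ y → IntervalIntegrable w MeasureTheory.volume 0 y := by
        intro y hy
        rw [intervalIntegrable_iff_integrableOn_Ioc_of_le hy]
        exact hintW.mono_set Set.Ioc_subset_Ioi_self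
      set Ψ : ℝ → ℝ := fun y => ∫ u in (0:ℝ)..y, w u with hΨdef
      have hΨd : ∀ y : ℝ, 0 < y → HasDerivAt Ψ (w y) y := by
        intro y hy
        exact intervalIntegral.integral_hasDerivAt_right (hIntOc y hy.le)
          ((hwcont.stronglyMeasurableAtFilter isOpen_Ioi) y hy)
          (hwcont.continuousAt (isOpen_Ioi.mem_nhds hy))
      have hΨpos : ∀ y : ℝ, 0 < y → 0 < Ψ y := by
        intro y hy
        exact intervalIntegral.intervalIntegral_pos_of_pos_on (hIntOc y hy.le)
          (fun u hu => hwpos u hu.1) hy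
      have hΨle : ∀ y : ℝ, 0 < y → Ψ y ≤ Tc := by
        intro y hy
        rw [hΨdef]
        dsimp only
        rw [intervalIntegral.integral_of_le hy.le, ← hiW]
        apply MeasureTheory.setIntegral_mono_set hintW
        · filter_upwards [MeasureTheory.ae_restrict_mem measurableSet_Ioi] with u hu
          simpa using (hwpos u hu).le
        · exact (Set.Ioc_subset_Ioi_self).eventuallyLE
      -- the decreasing quantity Ψ(V s) + (s - t₀)
      have hcomp2 : AntitoneOn (fun s => Ψ (V s) + (s - t₀)) (Set.Icc t₀ t) := by
        apply antitoneOn_of_hasDerivAt_nonpos (convex_Icc _ _)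
          (f' := fun s => w (V s) * (-2 * R s) + 1)
        · intro s hs
          exact ((hΨd (V s) (hVpos s hs)).comp s (hVd s hs.1)).add
            ((hasDerivAt_id s).sub_const t₀)
        · intro s hs
          rw [interior_Icc] at hs
          have hVs := hVpos s ⟨hs.1.le, hs.2.le⟩
          have hRs := hrate s hs.1.le hVs
          have hgV := hgpos _ hVs
          have hwV := hwpos _ hVs
          have hid : w (V s) * (2 * κs * g (V s)) = 1 := by
            rw [hwdef]
            dsimp only
            field_simp
          nlinarith [mul_le_mul_of_nonneg_left hRs hwV.le]
      have hfin := hcomp2 (Set.mem_Icc.2 ⟨le_refl t₀, htt₀⟩)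
        (Set.mem_Icc.2 ⟨htt₀, le_refl t⟩) htt₀
      have h1 := hΨle (V t₀) (hVpos t₀ ⟨le_refl _, htt₀⟩)
      have h2 := hΨpos (V t) hVtpos
      have hfin2 : Ψ (V t) + (t - t₀) ≤ Ψ (V t₀) + (t₀ - t₀) := hfin
      linarith
    · -- CASE A : Ω is bounded below by a positive constant on (0,∞) ;
      -- a solution would hit consensus in finite time with unbounded velocity,
      -- contradicting differentiability at the hitting time
      push_neg at hAB
      obtain ⟨c, hc, hcl⟩ := hAB
      have hAstep : ∀ s, t₀ ≤ s → 0 < V s → κs * c ≤ R s := by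
        intro s hs hVs
        obtain ⟨e, he⟩ := hedge s hs hVs
        have h1 : Ω |((D (σ s))ᵀ.mulVec (fun i => z s i - zstar i)) e| ≤ W s := by
          rw [hWdef]
          dsimp only
          have h2 := Finset.single_le_sum (f := fun e' =>
              (if ((D (σ s))ᵀ.mulVec (fun i => z s i - zstar i)) e' = 0 then 0
                else Ω |((D (σ s))ᵀ.mulVec (fun i => z s i - zstar i)) e'|))
            (fun e' _ => by
              split
              · exact le_refl _
              · exact hΩnn _ (abs_nonneg _)) (Finset.mem_univ e)
          simpa [if_neg he] using h2
        have h2 : c ≤ Ω |((D (σ s))ᵀ.mulVec (fun i => z s i - zstar i)) e| :=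
          hcl _ (abs_pos.2 he)
        calc κs * c ≤ κs * W s := mul_le_mul_of_nonneg_left (h2.trans h1) hκspos.le
          _ ≤ R s := hRκ s
      have hVt₀pos : 0 < V t₀ := hVpos t₀ ⟨le_refl _, htt₀⟩
      have hVcont : ContinuousOn V (Set.Ici t₀) := fun s hs =>
        (hVd s hs).continuousAt.continuousWithinAt
      have hZcl : IsClosed {s : ℝ | t₀ ≤ s ∧ V s = 0} := by
        have h1 : {s : ℝ | t₀ ≤ s ∧ V s = 0} = Set.Ici t₀ ∩ V ⁻¹' {0} := by
          ext u
          simp [Set.mem_Ici, Set.mem_setOf_eq]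
        rw [h1]
        exact hVcont.preimage_isClosed_of_isClosed isClosed_Ici isClosed_singleton
      have hZne : {s : ℝ | t₀ ≤ s ∧ V s = 0}.Nonempty := by
        by_contra hne
        rw [Set.not_nonempty_iff_eq_empty] at hne
        have hVpos' : ∀ s, t₀ ≤ s → 0 < V s := by
          intro s hs
          rcases (hVnn s).eq_or_lt with h | h
          · exact absurd (Set.eq_empty_iff_forall_notMem.1 hne s) (by
              intro h3
              exact h3 ⟨hs, h.symm⟩)
          · exact h
        set T : ℝ := t₀ + V t₀ / (2 * κs * c) + 1 with hTdef
        have hTge : t₀ ≤ T := by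
          have h1 : 0 ≤ V t₀ / (2 * κs * c) := div_nonneg (hVnn t₀) (by positivity)
          rw [hTdef]
          linarith
        have hanti2 : AntitoneOn (fun u => V u + 2 * κs * c * (u - t₀)) (Set.Icc t₀ T) := by
          apply antitoneOn_of_hasDerivAt_nonpos (convex_Icc _ _)
            (f' := fun u => -2 * R u + 2 * κs * c)
          · intro u hu
            have h2 : HasDerivAt (fun u => 2 * κs * c * (u - t₀)) (2 * κs * c) u := by
              simpa using ((hasDerivAt_id u).sub_const t₀).const_mul (2 * κs * c)
            exact (hVd u hu.1).add h2
          · intro u hu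
            rw [interior_Icc] at hu
            have := hAstep u hu.1.le (hVpos' u hu.1.le)
            linarith
        have hfin := hanti2 (Set.left_mem_Icc.2 hTge) (Set.right_mem_Icc.2 hTge) hTge
        have hq : 2 * κs * c * (V t₀ / (2 * κs * c)) = V t₀ := by field_simp
        have hTT : T - t₀ = V t₀ / (2 * κs * c) + 1 := by rw [hTdef]; ring
        have hVT := hVnn T
        have hfin2 : V T + 2 * κs * c * (T - t₀) ≤ V t₀ + 2 * κs * c * (t₀ - t₀) := hfin
        rw [hTT] at hfin2
        nlinarith [hκspos, hc]
      set ts : ℝ := sInf {s : ℝ | t₀ ≤ s ∧ V s = 0} with htsdef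
      have htsZ : ts ∈ {s : ℝ | t₀ ≤ s ∧ V s = 0} :=
        hZcl.csInf_mem hZne ⟨t₀, fun u hu => hu.1⟩
      have hts0 : t₀ ≤ ts := htsZ.1
      have htsV : V ts = 0 := htsZ.2
      have htsgt : t₀ < ts := by
        rcases hts0.lt_or_eq with h | h
        · exact h
        · exfalso
          rw [← h] at htsV
          linarith
      have hVpos2 : ∀ s, t₀ ≤ s → s < ts → 0 < V s := by
        intro s hs hlt
        rcases (hVnn s).eq_or_lt with h | h
        · exfalso
          have h1 : ts ≤ s := csInf_le ⟨t₀, fun u hu => hu.1⟩ ⟨hs, h.symm⟩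
          linarith
        · exact h
      have hlb : ∀ s, s ∈ Set.Icc t₀ ts → 2 * κs * c * (ts - s) ≤ V s := by
        intro s hs
        have hanti3 : AntitoneOn (fun u => V u + 2 * κs * c * (u - t₀)) (Set.Icc t₀ ts) := by
          apply antitoneOn_of_hasDerivAt_nonpos (convex_Icc _ _)
            (f' := fun u => -2 * R u + 2 * κs * c)
          · intro u hu
            have h2 : HasDerivAt (fun u => 2 * κs * c * (u - t₀)) (2 * κs * c) u := by
              simpa using ((hasDerivAt_id u).sub_const t₀).const_mul (2 * κs * c)
            exact (hVd u hu.1).add h2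
          · intro u hu
            rw [interior_Icc] at hu
            have := hAstep u hu.1.le (hVpos2 u hu.1.le hu.2)
            linarith
        have hfin := hanti3 hs (Set.right_mem_Icc.2 hts0) hs.2
        have hfin2 : V ts + 2 * κs * c * (ts - t₀) ≤ V s + 2 * κs * c * (s - t₀) := hfin
        rw [htsV] at hfin2
        nlinarith [hfin2]
      -- blow-up of the difference quotient at ts
      have hder := hz ts hts0
      set L : Fin n → ℝ :=
        -(D (σ ts)).mulVec (F (σ ts) ((D (σ ts))ᵀ.mulVec (fun i => z ts i - zstar i)))
        with hLdef
      rw [hasDerivAt_iff_tendsto_slope] at hder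
      have hL1 : (0:ℝ) < ‖L‖ + 1 := by positivity
      have hbd : ∀ᶠ s in nhdsWithin ts (Set.Iio ts), ‖slope z ts s‖ < ‖L‖ + 1 :=
        ((hder.mono_left (nhdsWithin_mono ts (fun u hu => ne_of_lt hu))).norm).eventually_lt_const
          (lt_add_one _)
      set εb : ℝ := min (ts - t₀) (2 * κs * c / ((n:ℝ) * (‖L‖ + 1) ^ 2)) with hεbdef
      have hεbpos : 0 < εb := by
        apply lt_min (by linarith)
        positivity
      have hmem : Set.Ioo (ts - εb) ts ∈ nhdsWithin ts (Set.Iio ts) :=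
        Ioo_mem_nhdsLT_of_mem ⟨by linarith, le_refl ts⟩
      obtain ⟨s, hsIoo, hsbd⟩ :=
        ((Filter.eventually_of_mem hmem (fun u hu => hu)).and hbd).exists
      have hεb1 : εb ≤ ts - t₀ := min_le_left _ _
      have hεb2' : εb ≤ 2 * κs * c / ((n:ℝ) * (‖L‖ + 1) ^ 2) := min_le_right _ _
      have hst₀ : t₀ ≤ s := by
        have := hsIoo.1
        linarith
      have hslt : s < ts := hsIoo.2
      have hts_s : 0 < ts - s := by linarith
      have hVs := hlb s ⟨hst₀, hslt.le⟩
      have hcoord : ∃ i, V s / (n:ℝ) ≤ (δf s i) ^ 2 := by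
        have hsum : ∑ _i : Fin n, V s / (n:ℝ) ≤ ∑ i, (δf s i) ^ 2 := by
          rw [Finset.sum_const, Finset.card_univ, Fintype.card_fin, nsmul_eq_mul,
            mul_div_cancel₀ _ (ne_of_gt hn0)]
        obtain ⟨i, _, hi⟩ := Finset.exists_le_of_sum_le Finset.univ_nonempty hsum
        exact ⟨i, hi⟩
      obtain ⟨i, hi⟩ := hcoord
      have hδts : δf ts i = 0 := by
        have h1 := (Finset.sum_eq_zero_iff_of_nonneg
          (fun j (_ : j ∈ Finset.univ) => sq_nonneg (δf ts j))).1 htsV i (Finset.mem_univ i)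
        exact pow_eq_zero_iff two_ne_zero |>.1 h1
      have h3 : (δf s i) ^ 2 = (z s i - z ts i) ^ 2 := by
        have hzts : z ts i = zstar i + μ := by
          have := hδts
          simp only [hδf] at this
          linarith
        simp only [hδf]
        rw [hzts]
        ring
      have habs : |s - ts| = ts - s := by
        rw [abs_sub_comm]
        exact abs_of_pos hts_s
      have h1 : ‖slope z ts s‖ = |s - ts|⁻¹ * ‖z s - z ts‖ := by
        rw [slope_def_module, norm_smul, norm_inv, Real.norm_eq_abs]
      have h2 : |z s i - z ts i| ≤ ‖z s - z ts‖ := by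
        have h4 := norm_le_pi_norm (z s - z ts) i
        simpa [Real.norm_eq_abs] using h4
      have h8 : ‖z s - z ts‖ = (ts - s) * ‖slope z ts s‖ := by
        rw [h1, habs]
        field_simp
      have h4 : |z s i - z ts i| ≤ (ts - s) * (‖L‖ + 1) := by
        calc |z s i - z ts i| ≤ ‖z s - z ts‖ := h2
          _ = (ts - s) * ‖slope z ts s‖ := h8
          _ ≤ (ts - s) * (‖L‖ + 1) := mul_le_mul_of_nonneg_left hsbd.le hts_s.le
      have h5 : V s / (n:ℝ) ≤ ((ts - s) * (‖L‖ + 1)) ^ 2 := by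
        calc V s / (n:ℝ) ≤ (δf s i) ^ 2 := hi
          _ = (z s i - z ts i) ^ 2 := h3
          _ = |z s i - z ts i| ^ 2 := (sq_abs _).symm
          _ ≤ ((ts - s) * (‖L‖ + 1)) ^ 2 := by
              apply pow_le_pow_left₀ (abs_nonneg _) h4
      have h6 : 2 * κs * c * (ts - s) ≤ ((ts - s) * (‖L‖ + 1)) ^ 2 * (n:ℝ) :=
        hVs.trans ((div_le_iff₀ hn0).1 h5)
      have hexp : ((ts - s) * (‖L‖ + 1)) ^ 2 * (n:ℝ)
          = ((n:ℝ) * (ts - s) * (‖L‖ + 1) ^ 2) * (ts - s) := by ring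
      rw [hexp] at h6
      have hA : 2 * κs * c ≤ (n:ℝ) * (ts - s) * (‖L‖ + 1) ^ 2 :=
        le_of_mul_le_mul_right h6 hts_s
      have hB : (ts - s) * ((n:ℝ) * (‖L‖ + 1) ^ 2) < 2 * κs * c := by
        have h7 : ts - s < 2 * κs * c / ((n:ℝ) * (‖L‖ + 1) ^ 2) := by
          have := hsIoo.1
          linarith
        exact (lt_div_iff₀ (by positivity)).1 h7
      nlinarith [hA, hB]
  -- conclusion
  have hδ0 : ∀ i, δf t i = 0 := by
    intro i
    have h1 := (Finset.sum_eq_zero_iff_of_nonneg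
      (fun i (_ : i ∈ Finset.univ) => sq_nonneg (δf t i))).1 hVt i (Finset.mem_univ i)
    exact pow_eq_zero_iff two_ne_zero |>.1 h1
  constructor
  · intro i
    have := hδ0 i
    simp only [hδf] at this
    linarith
  · intro i j
    have hi := hδ0 i; have hj := hδ0 j
    simp only [hδf] at hi hj
    linarith
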